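/- Let Λ be a finite subgroup of (ℝ/ℤ)^{d+1} (identified with [0,1)^{d+1}) such that ht(y) = k for every y ∈ Λ \ {0, x, −x}, where x ∈ Λ is an element with ht(x) = 2k and ht(−x) = k, and k ≥ 2. Then for every y ∈ Λ \ {0, x, −x}, the cardinality of supp(y) is exactly 2k. -/
import Mathlib


noncomputable section

/-- Fractional-part addition on `[0,1)`-vectors, modelling the group `(ℝ/ℤ)^n`. -/
def fadd {n : ℕ} (x y : Fin n → ℝ) : Fin n → ℝ := fun i => Int.fract (x i + y i)

/-- Inverse in `(ℝ/ℤ)^n` on `[0,1)`-representatives. -/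
def fneg {n : ℕ} (x : Fin n → ℝ) : Fin n → ℝ := fun i => Int.fract (-(x i))

/-- `j`-fold sum in `(ℝ/ℤ)^n` on `[0,1)`-representatives. -/
def fsmul {n : ℕ} (j : ℤ) (x : Fin n → ℝ) : Fin n → ℝ := fun i => Int.fract ((j : ℝ) * x i)

/-- The height `ht x = ∑ i, x i` of a `[0,1)`-vector. -/
def ht {n : ℕ} (x : Fin n → ℝ) : ℝ := ∑ i, x i

/-- The support `supp x = {i : x i ≠ 0}`. -/
def supp {n : ℕ} (x : Fin n → ℝ) : Set (Fin n) := {i | x i ≠ 0}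

/-- `S ⊆ [0,1)^n` is a subgroup of `(ℝ/ℤ)^n` (in `[0,1)`-coordinates). -/
def IsSubgroupSet {n : ℕ} (S : Set (Fin n → ℝ)) : Prop :=
  (∀ x ∈ S, ∀ i, x i ∈ Set.Ico (0 : ℝ) 1) ∧ 0 ∈ S ∧
    (∀ x ∈ S, ∀ y ∈ S, fadd x y ∈ S) ∧ ∀ x ∈ S, fneg x ∈ S

/-- The subgroup of `(ℝ/ℤ)^n` generated by a set of `[0,1)`-vectors. -/
def genSet {n : ℕ} (gs : Set (Fin n → ℝ)) : Set (Fin n → ℝ) :=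
  ⋂₀ {S | IsSubgroupSet S ∧ gs ⊆ S}



lemma fneg_fneg' {n : ℕ} (y : Fin n → ℝ) (h : ∀ i, y i ∈ Set.Ico (0:ℝ) 1) :
    fneg (fneg y) = y := by
  funext i
  have h1 : Int.fract (y i) = y i := Int.fract_eq_self.mpr ⟨(h i).1, (h i).2⟩
  simp only [fneg]
  by_cases h0 : y i = 0
  · simp [h0]
  · have hin : Int.fract (-(y i)) = 1 - y i := by
      rw [Int.fract_neg (by rw [h1]; exact h0), h1]
    rw [hin, show -(1 - y i) = y i - 1 by ring, Int.fract_sub_one, h1]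

lemma fneg_zero' {n : ℕ} : fneg (0 : Fin n → ℝ) = 0 := by
  funext i; simp [fneg]

theorem stmt3 (d k : ℕ) (hk : 2 ≤ k) (S : Set (Fin (d+1) → ℝ)) (hS : IsSubgroupSet S)
    (hfin : S.Finite) (x : Fin (d+1) → ℝ) (hx : x ∈ S)
    (hhtx : ht x = 2 * k) (hhtnx : ht (fneg x) = k)
    (hall : ∀ y ∈ S, y ≠ 0 → y ≠ x → y ≠ fneg x → ht y = k) :
    ∀ y ∈ S, y ≠ 0 → y ≠ x → y ≠ fneg x → (supp y).ncard = 2 * k := by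
  intro y hyS hy0 hyx hynx
  have hco := hS.1 y hyS
  have hnyS : fneg y ∈ S := hS.2.2.2 y hyS
  have hff : fneg (fneg y) = y := fneg_fneg' y hco
  have hny0 : fneg y ≠ 0 := fun h => hy0 (by rw [← hff, h, fneg_zero'])
  have hnyx : fneg y ≠ x := fun h => hynx (by rw [← hff, h])
  have hnynx : fneg y ≠ fneg x := fun h => hyx (by
    rw [← hff, h, fneg_fneg' x (hS.1 x hx)])
  have h1 : ht y = k := hall y hyS hy0 hyx hynx
  have h2 : ht (fneg y) = k := hall (fneg y) hnyS hny0 hnyx hnynx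
  have hsum : ht y + ht (fneg y) =
      ((Finset.univ.filter (fun i => y i ≠ 0)).card : ℝ) := by
    rw [ht, ht, ← Finset.sum_add_distrib]
    rw [Finset.card_filter, Nat.cast_sum]
    apply Finset.sum_congr rfl
    intro i _
    by_cases h0 : y i = 0
    · simp [fneg, h0]
    · have h1 : Int.fract (y i) = y i :=
        Int.fract_eq_self.mpr ⟨(hco i).1, (hco i).2⟩
      rw [fneg]
      rw [Int.fract_neg (by rw [h1]; exact h0), h1]
      simp [h0]
  have hcard : ((Finset.univ.filter (fun i => y i ≠ 0)).card : ℝ) = 2 * k := by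
    rw [← hsum, h1, h2]; ring
  have hsupp : supp y = ↑(Finset.univ.filter (fun i => y i ≠ 0)) := by
    ext i; simp [supp]
  rw [hsupp, Set.ncard_coe_finset]
  exact_mod_cast hcard
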